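/- Let G be a simple graph with vertex degrees d_1 ≥ d_2 ≥ … ≥ d_n, adjacency matrix A, and let A' be obtained from A by a symmetric positive switch at distinct coordinates (i,j,k,l) (i<j, k<l, all of i,j,k,l distinct): edges {i,l} and {j,k} are removed and edges {i,k} and {j,l} are added. Then the second Zagreb index M_2 = Σ_{edges uv} d_u d_v satisfies M_2(A') − M_2(A) = (d_i − d_j)(d_k − d_l) ≥ 0. -/

import Mathlib

/-- The switching matrix `C_{i,j,k,l}` (square, integer entries). -/
def switchMatrix {n : ℕ} (i j k l : Fin n) : Matrix (Fin n) (Fin n) ℤ :=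
  Matrix.single i k 1 + Matrix.single j l 1
    - Matrix.single i l 1 - Matrix.single j k 1

/-- The symmetric switching matrix `C_{i,j,k,l} + C_{i,j,k,l}ᵀ`. -/
def symSwitchMatrix {n : ℕ} (i j k l : Fin n) : Matrix (Fin n) (Fin n) ℤ :=
  switchMatrix i j k l + (switchMatrix i j k l).transpose

/-- Degree of vertex `u` in the graph with adjacency matrix `A`. -/
def deg {n : ℕ} (A : Matrix (Fin n) (Fin n) ℤ) (u : Fin n) : ℤ := ∑ v, A u v

/-- Second Zagreb index `M₂ = Σ_{edges uv} d_u d_v` (each edge counted once). -/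
def zagreb2 {n : ℕ} (A : Matrix (Fin n) (Fin n) ℤ) : ℤ :=
  ∑ u : Fin n, ∑ v : Fin n, if u < v then A u v * deg A u * deg A v else 0

lemma sum_lt_one {n : ℕ} (a b : Fin n) (d : Fin n → ℤ) :
    (∑ u : Fin n, ∑ v : Fin n,
        if u < v then Matrix.single a b (1:ℤ) u v * d u * d v else 0)
      = if a < b then d a * d b else 0 := by
  have hpt : ∀ u v : Fin n,
      (if u < v then Matrix.single a b (1:ℤ) u v * d u * d v else 0)
        = if b = v then (if a = u then (if u < v then d u * d v else 0) else 0) else 0 := by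
    intro u v
    rw [Matrix.single]
    simp only [Matrix.of_apply]
    split_ifs <;> simp_all
  simp only [hpt, Finset.sum_ite_eq, Finset.mem_univ, if_true]

lemma rowsum_sym {n : ℕ} (i j k l : Fin n) (u : Fin n) :
    ∑ v, symSwitchMatrix i j k l u v = 0 := by
  simp only [symSwitchMatrix, switchMatrix, Matrix.add_apply, Matrix.sub_apply,
    Matrix.transpose_apply, Matrix.single, Matrix.of_apply]
  simp only [Finset.sum_add_distrib, Finset.sum_sub_distrib, ite_and,
    Finset.sum_ite_eq, Finset.sum_ite_eq', Finset.mem_univ, if_true]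
  split_ifs <;> simp [Finset.sum_ite_eq] <;> ring

/-- a symmetric positive switch changes `M₂` by
`(d_i - d_j)(d_k - d_l) ≥ 0` when degrees are non-increasing. -/
theorem stmt9 {n : ℕ} (A A' : Matrix (Fin n) (Fin n) ℤ)
    (hbin : ∀ u v, A u v = 0 ∨ A u v = 1) (hsym : A.IsSymm) (hdiag : ∀ u, A u u = 0)
    (hmono : Antitone (deg A))
    (i j k l : Fin n) (hij : i < j) (hkl : k < l)
    (hik : i ≠ k) (hil : i ≠ l) (hjk : j ≠ k) (hjl : j ≠ l)
    (h1 : A i l = 1) (h2 : A j k = 1) (h3 : A i k = 0) (h4 : A j l = 0)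
    (hA' : A' = A + symSwitchMatrix i j k l) :
    zagreb2 A' - zagreb2 A = (deg A i - deg A j) * (deg A k - deg A l) ∧
      0 ≤ (deg A i - deg A j) * (deg A k - deg A l) := by
  have hdeg : deg A' = deg A := by
    funext u
    rw [hA']
    simp only [deg, Matrix.add_apply, Finset.sum_add_distrib, rowsum_sym, add_zero]
  set d := deg A with hd
  have hS : ∀ u v : Fin n, symSwitchMatrix i j k l u v
      = Matrix.single i k (1:ℤ) u v + Matrix.single k i (1:ℤ) u v
        + Matrix.single j l (1:ℤ) u v + Matrix.single l j (1:ℤ) u v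
        - Matrix.single i l (1:ℤ) u v - Matrix.single l i (1:ℤ) u v
        - Matrix.single j k (1:ℤ) u v - Matrix.single k j (1:ℤ) u v := by
    have tr : ∀ a b u v : Fin n,
        Matrix.single a b (1:ℤ) v u = Matrix.single b a (1:ℤ) u v := by
      intro a b u v
      simp [Matrix.single, and_comm]
    intro u v
    simp only [symSwitchMatrix, switchMatrix, Matrix.add_apply, Matrix.sub_apply,
      Matrix.transpose_apply, tr]
    ring
  have hdiff : zagreb2 A' - zagreb2 A
      = ∑ u : Fin n, ∑ v : Fin n,
          if u < v then symSwitchMatrix i j k l u v * d u * d v else 0 := by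
    simp only [zagreb2, hdeg, ← hd, ← Finset.sum_sub_distrib]
    apply Finset.sum_congr rfl; intro u _
    apply Finset.sum_congr rfl; intro v _
    rw [hA', Matrix.add_apply]
    split_ifs <;> ring
  have hsplit : ∀ u v : Fin n,
      (if u < v then symSwitchMatrix i j k l u v * d u * d v else 0)
      = (if u < v then Matrix.single i k (1:ℤ) u v * d u * d v else 0)
      + (if u < v then Matrix.single k i (1:ℤ) u v * d u * d v else 0)
      + (if u < v then Matrix.single j l (1:ℤ) u v * d u * d v else 0)
      + (if u < v then Matrix.single l j (1:ℤ) u v * d u * d v else 0)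
      - (if u < v then Matrix.single i l (1:ℤ) u v * d u * d v else 0)
      - (if u < v then Matrix.single l i (1:ℤ) u v * d u * d v else 0)
      - (if u < v then Matrix.single j k (1:ℤ) u v * d u * d v else 0)
      - (if u < v then Matrix.single k j (1:ℤ) u v * d u * d v else 0) := by
    intro u v
    rw [hS]
    split_ifs <;> ring
  have pair : ∀ a b : Fin n, a ≠ b →
      (if a < b then d a * d b else 0) + (if b < a then d b * d a else 0) = d a * d b := by
    intro a b h
    rcases lt_or_gt_of_ne h with h' | h'
    · rw [if_pos h', if_neg (asymm h'), add_zero]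
    · rw [if_neg (asymm h'), if_pos h', zero_add, mul_comm]
  have key : zagreb2 A' - zagreb2 A = (d i - d j) * (d k - d l) := by
    rw [hdiff]
    simp only [hsplit, Finset.sum_add_distrib, Finset.sum_sub_distrib, sum_lt_one]
    have e1 := pair i k hik
    have e2 := pair j l hjl
    have e3 := pair i l hil
    have e4 := pair j k hjk
    linear_combination e1 + e2 - e3 - e4
  exact ⟨key, mul_nonneg (sub_nonneg.2 (hmono hij.le)) (sub_nonneg.2 (hmono hkl.le))⟩
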